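/- Let X be a centered Gaussian vector with covariance σ²C_k. The maximum over all contiguous intervals [I, I+j] of the variance Var(∑_{L=I}^{I+j} X_L) is Θ(k)·σ²; in particular it is at most Cσ²k for a universal constant C and at least (2/3)σ²·⌊(k-1)/2⌋ for odd k. -/

import Mathlib

open Matrix


/-- All-ones matrix of size `2^k × 2^k`. -/
def Jmat (k : ℕ) : Matrix (Fin (2^k)) (Fin (2^k)) ℝ := Matrix.of fun _ _ => 1

/-- The recursively defined correlation matrices: `Cmat 1 = [[1,-1/2],[-1/2,1]]` and
`Cmat (k+1) = [[Cmat k, -J_k/2^(2k+1)], [-J_k/2^(2k+1), Cmat k]]`.  (`Cmat 0` is the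
`1×1` matrix `[1]`, which makes the recursion start correctly at `k = 1`.) -/
noncomputable def Cmat : (k : ℕ) → Matrix (Fin (2^k)) (Fin (2^k)) ℝ
  | 0 => Matrix.of fun _ _ => 1
  | (k+1) =>
      Matrix.reindex (finSumFinEquiv.trans (finCongr (by ring : 2^k + 2^k = 2^(k+1)))) (finSumFinEquiv.trans (finCongr (by ring : 2^k + 2^k = 2^(k+1))))
        (Matrix.fromBlocks (Cmat k) (-((1:ℝ)/2^(2*k+1)) • Jmat k)
          (-((1:ℝ)/2^(2*k+1)) • Jmat k) (Cmat k))

noncomputable def Ent : ℕ → ℕ → ℕ → ℝ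
  | 0, _, _ => 1
  | (k+1), i, j =>
    if i < 2^k ∧ j < 2^k then Ent k i j
    else if 2^k ≤ i ∧ 2^k ≤ j then Ent k (i - 2^k) (j - 2^k)
    else -(1/2^(2*k+1))

lemma Ent_left {k i j : ℕ} (hi : i < 2^k) (hj : j < 2^k) : Ent (k+1) i j = Ent k i j := by
  simp only [Ent]; rw [if_pos ⟨hi, hj⟩]

lemma Ent_shift {k i j : ℕ} (hi : 2^k ≤ i) (hj : 2^k ≤ j) :
    Ent (k+1) i j = Ent k (i - 2^k) (j - 2^k) := by
  simp only [Ent]; rw [if_neg (by omega), if_pos ⟨hi, hj⟩]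

lemma Ent_right {k i j : ℕ} : Ent (k+1) (i + 2^k) (j + 2^k) = Ent k i j := by
  rw [Ent_shift (by omega) (by omega)]; congr 1 <;> omega

lemma Ent_cross {k i j : ℕ} (hi : i < 2^k) (hj : 2^k ≤ j) : Ent (k+1) i j = -(1/2^(2*k+1)) := by
  simp only [Ent]; rw [if_neg (by omega), if_neg (by omega)]

lemma Ent_cross' {k i j : ℕ} (hi : 2^k ≤ i) (hj : j < 2^k) : Ent (k+1) i j = -(1/2^(2*k+1)) := by
  simp only [Ent]; rw [if_neg (by omega), if_neg (by omega)]

lemma finSumFinEquiv_symm_lt {m : ℕ} (x : Fin (m + m)) (h : (x : ℕ) < m) :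
    finSumFinEquiv.symm x = Sum.inl ⟨x, h⟩ := by
  have : x = Fin.castAdd m ⟨x, h⟩ := by ext; rfl
  conv_lhs => rw [this]
  exact finSumFinEquiv_symm_apply_castAdd _

lemma finSumFinEquiv_symm_ge {m : ℕ} (x : Fin (m + m)) (h : m ≤ (x : ℕ)) :
    finSumFinEquiv.symm x = Sum.inr ⟨(x : ℕ) - m, by omega⟩ := by
  have : x = Fin.natAdd m ⟨(x : ℕ) - m, by omega⟩ := by
    ext; simp only [Fin.natAdd_mk]; omega
  conv_lhs => rw [this]
  exact finSumFinEquiv_symm_apply_natAdd _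

lemma Cmat_apply : ∀ (k : ℕ) (i j : Fin (2^k)), Cmat k i j = Ent k (i : ℕ) (j : ℕ) := by
  intro k
  induction k with
  | zero => intro i j; rfl
  | succ k ih =>
    intro i j
    have h : 2^k + 2^k = 2^(k+1) := by ring
    show (Matrix.reindex (finSumFinEquiv.trans (finCongr h)) (finSumFinEquiv.trans (finCongr h))
        (Matrix.fromBlocks (Cmat k) (-((1:ℝ)/2^(2*k+1)) • Jmat k)
          (-((1:ℝ)/2^(2*k+1)) • Jmat k) (Cmat k))) i j = _
    rw [Matrix.reindex_apply, Matrix.submatrix_apply]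
    have esymm : ∀ x : Fin (2^(k+1)), (finSumFinEquiv.trans (finCongr h)).symm x
        = finSumFinEquiv.symm (Fin.cast h.symm x) := by intro x; rfl
    rw [esymm i, esymm j]
    rcases lt_or_ge (i : ℕ) (2^k) with hi | hi <;> rcases lt_or_ge (j : ℕ) (2^k) with hj | hj
    · rw [finSumFinEquiv_symm_lt _ hi, finSumFinEquiv_symm_lt _ hj]
      exact (ih _ _).trans (Ent_left hi hj).symm
    · rw [finSumFinEquiv_symm_lt _ hi, finSumFinEquiv_symm_ge _ hj, Ent_cross hi hj]
      show -((1:ℝ)/2^(2*k+1)) * 1 = -(1/2^(2*k+1))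
      ring
    · rw [finSumFinEquiv_symm_ge _ hi, finSumFinEquiv_symm_lt _ hj, Ent_cross' hi hj]
      show -((1:ℝ)/2^(2*k+1)) * 1 = -(1/2^(2*k+1))
      ring
    · rw [finSumFinEquiv_symm_ge _ hi, finSumFinEquiv_symm_ge _ hj, Ent_shift hi hj]
      exact ih _ _

noncomputable def F (k a b : ℕ) : ℝ := ∑ i ∈ Finset.Icc a b, ∑ j ∈ Finset.Icc a b, Ent k i j

lemma F_left {k a b : ℕ} (hb : b < 2^k) : F (k+1) a b = F k a b := by
  unfold F
  refine Finset.sum_congr rfl fun i hi => Finset.sum_congr rfl fun j hj => ?_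
  simp only [Finset.mem_Icc] at hi hj
  exact Ent_left (by omega) (by omega)

lemma F_right {k a b a' b' : ℕ} (ha : a = a' + 2^k) (hb : b = b' + 2^k) :
    F (k+1) a b = F k a' b' := by
  subst ha hb
  unfold F
  rw [← Finset.map_add_right_Icc a' b' (2^k), Finset.sum_map]
  refine Finset.sum_congr rfl fun i _ => ?_
  rw [Finset.sum_map]
  exact Finset.sum_congr rfl fun j _ => Ent_right

lemma F_split {k a b : ℕ} (ha : a < 2^k) (hb : 2^k ≤ b) :
    F (k+1) a b = F (k+1) a (2^k - 1) + F (k+1) (2^k) b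
      - 2 * ((2^k - a : ℕ) : ℝ) * ((b + 1 - 2^k : ℕ) : ℝ) * (1/2^(2*k+1)) := by
  have hu : Finset.Icc a b = Finset.Icc a (2^k - 1) ∪ Finset.Icc (2^k) b := by
    ext x; simp only [Finset.mem_Icc, Finset.mem_union]; omega
  have hd : Disjoint (Finset.Icc a (2^k-1)) (Finset.Icc (2^k) b) := by
    simp only [Finset.disjoint_left, Finset.mem_Icc]; omega
  have c1 : (Finset.Icc a (2^k-1)).card = 2^k - a := by rw [Nat.card_Icc]; omega
  have c2 : (Finset.Icc (2^k) b).card = b + 1 - 2^k := by rw [Nat.card_Icc]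
  have cr1 : ∀ i ∈ Finset.Icc a (2^k-1), ∑ j ∈ Finset.Icc (2^k) b, Ent (k+1) i j
      = ((b + 1 - 2^k : ℕ) : ℝ) * (-(1/2^(2*k+1))) := by
    intro i hi
    simp only [Finset.mem_Icc] at hi
    rw [Finset.sum_congr rfl (fun j hj => ?_), Finset.sum_const, c2, nsmul_eq_mul]
    simp only [Finset.mem_Icc] at hj
    exact Ent_cross (by omega) (by omega)
  have cr2 : ∀ i ∈ Finset.Icc (2^k) b, ∑ j ∈ Finset.Icc a (2^k-1), Ent (k+1) i j
      = ((2^k - a : ℕ) : ℝ) * (-(1/2^(2*k+1))) := by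
    intro i hi
    simp only [Finset.mem_Icc] at hi
    rw [Finset.sum_congr rfl (fun j hj => ?_), Finset.sum_const, c1, nsmul_eq_mul]
    simp only [Finset.mem_Icc] at hj
    exact Ent_cross' (by omega) (by omega)
  unfold F
  rw [hu, Finset.sum_union hd]
  rw [Finset.sum_congr (rfl : Finset.Icc a (2^k-1) = _)
    (fun i hi => Finset.sum_union hd)]
  rw [Finset.sum_congr (rfl : Finset.Icc (2^k) b = _)
    (fun i hi => Finset.sum_union hd)]
  rw [Finset.sum_add_distrib, Finset.sum_add_distrib]
  rw [Finset.sum_congr rfl cr1, Finset.sum_congr rfl cr2]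
  rw [Finset.sum_const, Finset.sum_const, c1, c2, nsmul_eq_mul, nsmul_eq_mul]
  ring

lemma Ent_diag : ∀ k a, Ent k a a = (1:ℝ) := by
  intro k
  induction k with
  | zero => intro a; rfl
  | succ k ih =>
    intro a
    rcases lt_or_ge a (2^k) with h | h
    · rw [Ent_left h h, ih]
    · rw [Ent_shift h h, ih]

lemma F_singleton (k a : ℕ) : F k a a = 1 := by
  unfold F
  rw [Finset.Icc_self, Finset.sum_singleton, Finset.sum_singleton, Ent_diag]

lemma F_empty {k a b : ℕ} (h : b < a) : F k a b = 0 := by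
  unfold F
  rw [Finset.Icc_eq_empty (by omega), Finset.sum_empty]

lemma pow_arith (k : ℕ) : (2:ℝ)^(2*k+1) = 2 * (2^k * 2^k) := by
  rw [show 2*k+1 = (k+k)+1 by ring, pow_succ, pow_add]; ring

lemma F_total : ∀ k, F k 0 (2^k - 1) = 1 := by
  intro k
  induction k with
  | zero => simpa using F_singleton 0 0
  | succ k ih =>
    have h1 : (1:ℕ) ≤ 2^k := Nat.one_le_two_pow
    have h2 : (2:ℕ)^(k+1) = 2^k + 2^k := by rw [pow_succ]; ring
    rw [F_split (k := k) (a := 0) (b := 2^(k+1) - 1) (by omega) (by omega),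
      F_left (by omega), ih, F_right (a' := 0) (b' := 2^k - 1) (by omega) (by omega), ih]
    have c1 : ((2^k - 0 : ℕ) : ℝ) = 2^k := by rw [Nat.sub_zero]; push_cast; ring
    have c2 : ((2^(k+1) - 1 + 1 - 2^k : ℕ) : ℝ) = 2^k := by
      rw [show (2:ℕ)^(k+1) - 1 + 1 - 2^k = 2^k by omega]; push_cast; ring
    rw [c1, c2, pow_arith]
    have h0 : (2:ℝ)^k ≠ 0 := by positivity
    field_simp
    ring

lemma cross_nonneg (x y : ℕ) (k : ℕ) : (0:ℝ) ≤ 2 * (x:ℝ) * (y:ℝ) * (1/2^(2*k+1)) := by positivity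

lemma F_prefix_le : ∀ k b, b < 2^k → F k 0 b ≤ k + 1 := by
  intro k
  induction k with
  | zero =>
    intro b hb
    interval_cases b
    simpa using (F_singleton 0 0).le
  | succ k ih =>
    intro b hb
    have h1 : (1:ℕ) ≤ 2^k := Nat.one_le_two_pow
    have h2 : (2:ℕ)^(k+1) = 2^k + 2^k := by rw [pow_succ]; ring
    rcases lt_or_ge b (2^k) with h | h
    · rw [F_left h]
      have := ih b h
      push_cast
      push_cast at this
      linarith
    · rw [F_split (by omega) h, F_left (by omega), F_total,
        F_right (a' := 0) (b' := b - 2^k) (by omega) (by omega)]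
      have := ih (b - 2^k) (by omega)
      have hc := cross_nonneg (2^k - 0) (b + 1 - 2^k) k
      push_cast
      push_cast at this
      linarith

lemma F_suffix_le : ∀ k a, a < 2^k → F k a (2^k - 1) ≤ k + 1 := by
  intro k
  induction k with
  | zero =>
    intro a ha
    interval_cases a
    simpa using (F_singleton 0 0).le
  | succ k ih =>
    intro a ha
    have h1 : (1:ℕ) ≤ 2^k := Nat.one_le_two_pow
    have h2 : (2:ℕ)^(k+1) = 2^k + 2^k := by rw [pow_succ]; ring
    rcases lt_or_ge a (2^k) with h | h
    · rw [F_split h (by omega), F_left (by omega),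
        F_right (a' := 0) (b' := 2^k - 1) (by omega) (by omega), F_total]
      have := ih a h
      have hc := cross_nonneg (2^k - a) (2^(k+1) - 1 + 1 - 2^k) k
      push_cast
      push_cast at this
      linarith
    · rw [F_right (a' := a - 2^k) (b' := 2^k - 1) (by omega) (by omega)]
      have := ih (a - 2^k) (by omega)
      push_cast
      push_cast at this
      linarith

lemma F_le : ∀ k a b, b < 2^k → F k a b ≤ 2*k + 1 := by
  intro k
  induction k with
  | zero =>
    intro a b hb
    interval_cases b
    rcases Nat.eq_zero_or_pos a with h | h
    · subst h; simpa using (F_singleton 0 0).le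
    · rw [F_empty h]; norm_num
  | succ k ih =>
    intro a b hb
    have h1 : (1:ℕ) ≤ 2^k := Nat.one_le_two_pow
    have h2 : (2:ℕ)^(k+1) = 2^k + 2^k := by rw [pow_succ]; ring
    rcases lt_or_ge b (2^k) with h | h
    · rw [F_left h]
      have := ih a b h
      push_cast; push_cast at this; linarith
    · rcases lt_or_ge a (2^k) with h' | h'
      · rw [F_split h' h, F_left (by omega),
          F_right (a' := 0) (b' := b - 2^k) (by omega) (by omega)]
        have hq := F_suffix_le k a h'
        have hp := F_prefix_le k (b - 2^k) (by omega)
        have hc := cross_nonneg (2^k - a) (b + 1 - 2^k) k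
        push_cast
        push_cast at hq hp
        linarith
      · rw [F_right (a' := a - 2^k) (b' := b - 2^k) (by omega) (by omega)]
        have := ih (a - 2^k) (b - 2^k) (by omega)
        push_cast; push_cast at this; linarith

def Lm : ℕ → ℕ
  | 0 => 1
  | (m+1) => 2^(2*m+2) + Lm m

lemma Lm3 : ∀ m, 3 * Lm m + 1 = 2^(2*m+2) := by
  intro m
  induction m with
  | zero => norm_num [Lm]
  | succ m ih =>
    simp only [Lm]
    have e : (2:ℕ)^(2*(m+1)+2) = 4*2^(2*m+2) := by ring
    omega

lemma glow : ∀ m : ℕ, (2/3 : ℝ) * m ≤ F (2*m+1) (2^(2*m+1) - Lm m) (2^(2*m+1) - 1) := by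
  intro m
  induction m with
  | zero =>
    norm_num [Lm]
    rw [F_singleton]
    norm_num
  | succ m ih =>
    have p1 : (1:ℕ) ≤ 2^(2*m) := Nat.one_le_two_pow
    have e1 : (2:ℕ)^(2*m+1) = 2*2^(2*m) := by ring
    have e2 : (2:ℕ)^(2*m+1+1) = 4*2^(2*m) := by ring
    have e3 : (2:ℕ)^(2*m+1+1+1) = 8*2^(2*m) := by ring
    have hL : 3 * Lm m + 1 = 2^(2*m+2) := Lm3 m
    have hL' : 3 * Lm m + 1 = 4*2^(2*m) := by
      rw [hL]; ring
    have hLsucc : Lm (m+1) = 2^(2*m+2) + Lm m := rfl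
    have hLsucc' : Lm (m+1) = 4*2^(2*m) + Lm m := by omega
    rw [show 2*(m+1)+1 = 2*m+1+1+1 from by ring]
    rw [F_split (by omega) (by omega)]
    rw [F_left (by omega)]
    rw [F_right (k := 2*m+1) (a' := 2^(2*m+1) - Lm m) (b' := 2^(2*m+1) - 1) (by omega) (by omega)]
    rw [F_right (k := 2*m+1+1) (a' := 0) (b' := 2^(2*m+1+1) - 1) (by omega) (by omega)]
    rw [F_total]
    have hcross : ∀ x y : ℕ, x = Lm m → y = 2^(2*m+1+1) →
        2*(x:ℝ)*(y:ℝ)*(1/2^(2*(2*m+1+1)+1)) ≤ 1/3 := by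
      intro x y hx hy
      subst hx hy
      have hcast : 3*((Lm m : ℕ):ℝ) + 1 = 2^(2*m+1+1) := by
        exact_mod_cast congrArg (Nat.cast (R := ℝ)) (by omega : 3 * Lm m + 1 = 2^(2*m+1+1))
      have hX : (0:ℝ) < 2^(2*m+1+1) := by positivity
      push_cast
      push_cast at hcast
      rw [pow_arith (2*m+1+1)]
      rw [show 2*((Lm m : ℕ):ℝ)*(2:ℝ)^(2*m+1+1)*(1/(2*((2:ℝ)^(2*m+1+1)*(2:ℝ)^(2*m+1+1))))
          = ((Lm m : ℕ):ℝ)/(2:ℝ)^(2*m+1+1) from by field_simp]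
      rw [div_le_div_iff₀ hX (by norm_num : (0:ℝ) < 3)]
      linarith
    have hc := hcross (2^(2*m+1+1) - (2^(2*m+1+1+1) - Lm (m+1)))
      (2^(2*m+1+1+1) - 1 + 1 - 2^(2*m+1+1)) (by omega) (by omega)
    push_cast
    push_cast at ih hc
    linarith

lemma sum_eq (k : ℕ) (a b : Fin (2^k)) :
    ∑ i ∈ Finset.Icc a b, ∑ j ∈ Finset.Icc a b, Cmat k i j = F k (a : ℕ) (b : ℕ) := by
  unfold F
  rw [← Fin.map_valEmbedding_Icc, Finset.sum_map]
  refine Finset.sum_congr rfl fun i _ => ?_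
  rw [Finset.sum_map]
  exact Finset.sum_congr rfl fun j _ => Cmat_apply k i j


/-- For a centered Gaussian vector with covariance `σ²C_k`, the variance of the sum over
a contiguous interval `[a,b]` of coordinates is `σ² ∑_{i,j∈[a,b]} C_k(i,j)`.  The
maximum such variance over all intervals is `Θ(k)·σ²`: there is a universal constant
`c > 0` such that every interval variance is at most `c·σ²·k`, and for odd `k` some
interval has variance at least `(2/3)·σ²·⌊(k-1)/2⌋`. -/
theorem max_interval_variance_theta :
    ∃ c : ℝ, 0 < c ∧
      ∀ (k : ℕ), 1 ≤ k → ∀ σ : ℝ,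
        (∀ a b : Fin (2^k),
          σ^2 * ∑ i ∈ Finset.Icc a b, ∑ j ∈ Finset.Icc a b, Cmat k i j ≤ c * σ^2 * k) ∧
        (Odd k →
          ∃ a b : Fin (2^k),
            (2/3) * σ^2 * (((k - 1) / 2 : ℕ) : ℝ) ≤
              σ^2 * ∑ i ∈ Finset.Icc a b, ∑ j ∈ Finset.Icc a b, Cmat k i j) := by
  refine ⟨3, by norm_num, fun k hk σ => ⟨?_, ?_⟩⟩
  · intro a b
    rw [sum_eq]
    rcases le_or_gt a b with hab | hab
    · have h1 := F_le k a b b.isLt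
      have hk' : (1:ℝ) ≤ k := by exact_mod_cast hk
      have h2 := mul_le_mul_of_nonneg_left h1 (sq_nonneg σ)
      have h3 : (0:ℝ) ≤ σ^2 * ((k:ℝ) - 1) :=
        mul_nonneg (sq_nonneg σ) (by linarith)
      nlinarith
    · rw [F_empty (by exact_mod_cast hab)]
      rw [mul_zero]
      positivity
  · intro hodd
    obtain ⟨m, hm⟩ := hodd
    subst hm
    have hpow : (1:ℕ) ≤ 2^(2*m) := Nat.one_le_two_pow
    have e1 : (2:ℕ)^(2*m+1) = 2*2^(2*m) := by ring
    have e2 : (2:ℕ)^(2*m+2) = 4*2^(2*m) := by ring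
    have hL : 3 * Lm m + 1 = 2^(2*m+2) := Lm3 m
    have hL1 : 1 ≤ Lm m := by omega
    have hX1 : 1 ≤ 2^(2*m+1) := Nat.one_le_two_pow
    refine ⟨⟨2^(2*m+1) - Lm m, Nat.sub_lt (by positivity) (by omega)⟩,
      ⟨2^(2*m+1) - 1, Nat.sub_lt (by positivity) Nat.one_pos⟩, ?_⟩
    rw [sum_eq]
    rw [show (2*m+1-1)/2 = m from by omega]
    have hG := glow m
    have h2 := mul_le_mul_of_nonneg_left hG (sq_nonneg σ)
    linarith
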